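/- (Liveness vote-counting in case of honest disagreement) Suppose n ≥ 3f + 2p + 1 with f' ≤ f corrupt replicas, every honest replica casts exactly one first vote, and no non-timeout block receives first votes from more than f + p honest replicas. Then once a replica has recorded the first votes of all n - f' honest replicas (and possibly some corrupt votes), allVotes - maxVotes ≥ f + p + 1. -/
import Mathlib


/-- Liveness vote counting in case of honest disagreement: if every honest
replica casts exactly one first vote, no non-timeout block gets first votes
from more than `f + p` honest replicas, and a replica has recorded the first
votes of all honest replicas, then `allVotes - maxVotes ≥ f + p + 1`. -/
theorem liveness_vote_counting_disagreement
    {α Block : Type} [DecidableEq α] [DecidableEq Block]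
    (n f p f' : ℕ) (hn : n ≥ 3 * f + 2 * p + 1) (hf' : f' ≤ f)
    (R : Finset α) (hR : R.card = n)
    (corrupt : Finset α) (hcsub : corrupt ⊆ R) (hc : corrupt.card = f')
    (timeout : Block)
    (firstVote : α → Option Block)
    (hhonestVote : ∀ r ∈ R \ corrupt, firstVote r ≠ none)
    (hnomaj : ∀ B : Block, B ≠ timeout →
      ((R \ corrupt).filter (fun r => firstVote r = some B)).card ≤ f + p)
    (viewQ : α → Option Block)
    (hrecorded : ∀ r ∈ R \ corrupt, viewQ r = firstVote r) :
    (R.filter (fun r => viewQ r ≠ none)).card -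
      (R.sup (fun r =>
        match viewQ r with
        | none => 0
        | some B =>
            if B = timeout then 0
            else (R.filter (fun r' => viewQ r' = some B)).card)) ≥ f + p + 1 := by
  set A := R.filter (fun r => viewQ r ≠ none) with hAdef
  have hHsub : R \ corrupt ⊆ A := by
    intro r hr
    simp only [hAdef, Finset.mem_filter]
    exact ⟨(Finset.mem_sdiff.mp hr).1, by rw [hrecorded r hr]; exact hhonestVote r hr⟩
  have hHcard : (R \ corrupt).card = n - f' := by
    rw [Finset.card_sdiff_of_subset hcsub, hR, hc]
  have hAcard : n - f' ≤ A.card := hHcard ▸ Finset.card_le_card hHsub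
  have key : ∀ r ∈ R, (match viewQ r with
      | none => 0
      | some B => if B = timeout then 0
          else (R.filter (fun r' => viewQ r' = some B)).card) ≤ A.card - (f + p + 1) := by
    intro r _
    cases hv : viewQ r with
    | none => simp
    | some B =>
      simp only
      by_cases hB : B = timeout
      · simp [hB]
      · simp only [hB, if_false]
        have hsplit : (R.filter (fun r' => viewQ r' = some B)).card ≤
            ((R \ corrupt).filter (fun r' => viewQ r' = some B)).card +
            (corrupt.filter (fun r' => viewQ r' = some B)).card := by
          refine le_trans (Finset.card_le_card ?_) (Finset.card_union_le _ _)
          intro x hx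
          simp only [Finset.mem_filter, Finset.mem_union, Finset.mem_sdiff] at *
          by_cases hxc : x ∈ corrupt
          · exact Or.inr ⟨hxc, hx.2⟩
          · exact Or.inl ⟨⟨hx.1, hxc⟩, hx.2⟩
        have hhonest : ((R \ corrupt).filter (fun r' => viewQ r' = some B)).card ≤ f + p := by
          have heq : (R \ corrupt).filter (fun r' => viewQ r' = some B) =
              (R \ corrupt).filter (fun r' => firstVote r' = some B) :=
            Finset.filter_congr (fun x hx => by rw [hrecorded x hx])
          rw [heq]; exact hnomaj B hB
        have hCBsub : corrupt.filter (fun r' => viewQ r' = some B) ⊆ A := by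
          intro x hx
          simp only [Finset.mem_filter, hAdef] at *
          exact ⟨hcsub hx.1, by simp [hx.2]⟩
        have hdisj : Disjoint (R \ corrupt) (corrupt.filter (fun r' => viewQ r' = some B)) :=
          Finset.sdiff_disjoint.mono_right (Finset.filter_subset _ _)
        have hbig : (R \ corrupt).card + (corrupt.filter (fun r' => viewQ r' = some B)).card
            ≤ A.card := by
          rw [← Finset.card_union_of_disjoint hdisj]
          exact Finset.card_le_card (Finset.union_subset hHsub hCBsub)
        omega
  have hsup := Finset.sup_le key
  have hAbig : f + p + 1 ≤ A.card := by omega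
  omega
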